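/- Summability of Sobolev weights for q ≥ 3: with w_{k,q} = (1+2k/(q−1))^{−1} b_{k,q}(ψ(·;a)) and d_{k,q} = (1+2k/(q−1)) C_k^{(q−1)/2}(1), for any a ∈ [−1,1] and integer q ≥ 3, the series Σ_{k=1}^∞ w_{k,q}² d_{k,q} converges. -/

import Mathlib

/-- The constant `α_{k,q} = Γ(k+1/2)²Γ((q−1)/2)²/(2πΓ(k+q/2)²)`. -/
noncomputable def alphaKQ (q : ℝ) (k : ℕ) : ℝ :=
  Real.Gamma ((k : ℝ) + 1 / 2) ^ 2 * Real.Gamma ((q - 1) / 2) ^ 2 /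
    (2 * Real.pi * Real.Gamma ((k : ℝ) + q / 2) ^ 2)

/-- Gegenbauer coefficients `b_{k,q}(ψ(·;a))` of the stereographic kernel. -/
noncomputable def bPsi (q a : ℝ) (k : ℕ) : ℝ :=
  if k % 2 = 0 then alphaKQ q (k / 2) * (2 * (k : ℝ) + q - 1) * (1 + a)
  else alphaKQ q (k / 2) * (k : ℝ) * (2 * (k : ℝ) + q - 1) * (1 - a) / ((k : ℝ) - 1 + q)

/-- Sobolev weights `w_{k,q} = (1+2k/(q−1))⁻¹ b_{k,q}(ψ(·;a))`. -/
noncomputable def wPsi (q a : ℝ) (k : ℕ) : ℝ :=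
  (1 + 2 * (k : ℝ) / (q - 1))⁻¹ * bPsi q a k

/-- Dimension constants `d_{k,q} = (1+2k/(q−1)) C_k^{(q−1)/2}(1)` with
`C_k^{(q−1)/2}(1) = Γ(k+q−1)/(Γ(q−1)k!)`. -/
noncomputable def dKQ (q : ℝ) (k : ℕ) : ℝ :=
  (1 + 2 * (k : ℝ) / (q - 1)) *
    (Real.Gamma ((k : ℝ) + q - 1) / (Real.Gamma (q - 1) * (Nat.factorial k : ℝ)))

lemma gamma_prod (x : ℝ) (hx : 0 < x) (s : ℕ) :
    Real.Gamma (x + s) = Real.Gamma x * ∏ j ∈ Finset.range s, (x + j) := by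
  induction s with
  | zero => simp
  | succ k ih =>
    have h : x + (k:ℝ) ≠ 0 := by positivity
    have : x + ((k:ℕ)+1:ℕ) = (x + k) + 1 := by push_cast; ring
    rw [Finset.prod_range_succ, this, Real.Gamma_add_one h, ih]; ring


lemma gamma_half_sq (x : ℝ) (hx : 0 < x) :
    Real.Gamma (x + 1/2) ^ 2 ≤ Real.Gamma x * Real.Gamma (x + 1) := by
  have hc := Real.convexOn_log_Gamma
  have h := hc.2 (Set.mem_Ioi.2 hx) (Set.mem_Ioi.2 (by linarith : (0:ℝ) < x + 1))
    (by norm_num : (0:ℝ) ≤ (1/2:ℝ)) (by norm_num : (0:ℝ) ≤ (1/2:ℝ)) (by norm_num)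
  have hmid : (1/2:ℝ) • x + (1/2:ℝ) • (x+1) = x + 1/2 := by ring_nf
  rw [hmid] at h
  simp only [Function.comp_apply, smul_eq_mul] at h
  have h1 : (0:ℝ) < Real.Gamma (x + 1/2) := Real.Gamma_pos_of_pos (by linarith)
  have h2 : (0:ℝ) < Real.Gamma x := Real.Gamma_pos_of_pos hx
  have h3 : (0:ℝ) < Real.Gamma (x+1) := Real.Gamma_pos_of_pos (by linarith)
  have := Real.exp_le_exp.mpr (by linarith : 2 * Real.log (Real.Gamma (x+1/2)) ≤ Real.log (Real.Gamma x) + Real.log (Real.Gamma (x+1)))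
  rw [Real.exp_add, Real.exp_log h2, Real.exp_log h3, mul_comm 2, Real.exp_mul, Real.exp_log h1] at this
  calc Real.Gamma (x + 1/2) ^ 2 = Real.Gamma (x+1/2) ^ (2:ℝ) := by
        rw [← Real.rpow_natCast]; norm_num
    _ ≤ _ := this

lemma lemA (q m : ℕ) (hq : 3 ≤ q) (hm : 1 ≤ m) :
    Real.Gamma ((m:ℝ) + 1/2) ^ 2 * (m:ℝ) ^ (q-1) ≤ Real.Gamma ((m:ℝ) + q/2) ^ 2 := by
  have hm1 : (1:ℝ) ≤ (m:ℝ) := by exact_mod_cast hm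
  have hm0 : (0:ℝ) < (m:ℝ) := by linarith
  have hGh : (0:ℝ) < Real.Gamma ((m:ℝ) + 1/2) := Real.Gamma_pos_of_pos (by linarith)
  rcases Nat.even_or_odd q with ⟨s, hs⟩ | ⟨s, hs⟩
  · -- q = 2s, s ≥ 2
    have hs2 : 2 ≤ s := by omega
    have hq2 : (q:ℝ)/2 = (s:ℕ) := by push_cast; rw [hs]; push_cast; ring
    rw [hq2, gamma_prod _ hm0 s]
    have hprod : (m:ℝ)^s ≤ ∏ j ∈ Finset.range s, ((m:ℝ) + j) := by
      calc (m:ℝ)^s = ∏ j ∈ Finset.range s, (m:ℝ) := by rw [Finset.prod_const, Finset.card_range]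
        _ ≤ _ := Finset.prod_le_prod (fun i _ => by positivity) (fun i _ => by
            have : (0:ℝ) ≤ (i:ℝ) := Nat.cast_nonneg i; linarith)
    have hG : (0:ℝ) < Real.Gamma (m:ℝ) := Real.Gamma_pos_of_pos hm0
    have hup : Real.Gamma ((m:ℝ) + 1/2)^2 ≤ (m:ℝ) * Real.Gamma (m:ℝ)^2 := by
      have := gamma_half_sq (m:ℝ) hm0
      rwa [Real.Gamma_add_one hm0.ne', show Real.Gamma (m:ℝ) * ((m:ℝ) * Real.Gamma (m:ℝ)) = (m:ℝ) * Real.Gamma (m:ℝ)^2 by ring] at this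
    have hqs : q - 1 = 2*s - 1 := by omega
    rw [hqs]
    have key : (m:ℝ) * Real.Gamma (m:ℝ)^2 * (m:ℝ)^(2*s-1) ≤ (Real.Gamma (m:ℝ) * ∏ j ∈ Finset.range s, ((m:ℝ)+j))^2 := by
      have h1 : (m:ℝ) * (m:ℝ)^(2*s-1) = ((m:ℝ)^s)^2 := by
        rw [← pow_succ', ← pow_mul]; congr 1; omega
      calc (m:ℝ) * Real.Gamma (m:ℝ)^2 * (m:ℝ)^(2*s-1)
          = Real.Gamma (m:ℝ)^2 * ((m:ℝ)^s)^2 := by rw [← h1]; ring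
        _ ≤ Real.Gamma (m:ℝ)^2 * (∏ j ∈ Finset.range s, ((m:ℝ)+j))^2 := by
            gcongr
        _ = _ := by ring
    calc Real.Gamma ((m:ℝ)+1/2)^2 * (m:ℝ)^(2*s-1)
        ≤ (m:ℝ) * Real.Gamma (m:ℝ)^2 * (m:ℝ)^(2*s-1) := by
          gcongr
      _ ≤ _ := key
  · -- q = 2s+1, s ≥ 1
    have hs1 : 1 ≤ s := by omega
    have hq2 : (m:ℝ) + (q:ℝ)/2 = ((m:ℝ) + 1/2) + (s:ℕ) := by rw [hs]; push_cast; ring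
    rw [hq2, gamma_prod _ (by linarith) s]
    have hprod : (m:ℝ)^s ≤ ∏ j ∈ Finset.range s, ((m:ℝ) + 1/2 + j) := by
      calc (m:ℝ)^s = ∏ j ∈ Finset.range s, (m:ℝ) := by rw [Finset.prod_const, Finset.card_range]
        _ ≤ _ := Finset.prod_le_prod (fun i _ => by positivity) (fun i _ => by
            have : (0:ℝ) ≤ (i:ℝ) := Nat.cast_nonneg i; linarith)
    have hqs : q - 1 = 2*s := by omega
    rw [hqs]
    calc Real.Gamma ((m:ℝ)+1/2)^2 * (m:ℝ)^(2*s)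
        = Real.Gamma ((m:ℝ)+1/2)^2 * ((m:ℝ)^s)^2 := by rw [← pow_mul, mul_comm s 2]
      _ ≤ Real.Gamma ((m:ℝ)+1/2)^2 * (∏ j ∈ Finset.range s, ((m:ℝ)+1/2+j))^2 := by
          gcongr
      _ = _ := by ring

lemma fact_le_aux (n m : ℕ) : (n + m).factorial ≤ n.factorial * (n + m)^m := by
  induction m with
  | zero => simp
  | succ k ih =>
    have h1 : (n + (k+1)).factorial = (n + k + 1) * (n + k).factorial := by
      rw [show n + (k+1) = (n+k) + 1 by ring, Nat.factorial_succ]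
    rw [h1]
    calc (n + k + 1) * (n + k).factorial ≤ (n + k + 1) * (n.factorial * (n+k)^k) :=
          Nat.mul_le_mul_left _ ih
      _ ≤ (n + k + 1) * (n.factorial * (n+k+1)^k) := by
          apply Nat.mul_le_mul_left; apply Nat.mul_le_mul_left
          exact Nat.pow_le_pow_left (by omega) k
      _ = n.factorial * (n + (k+1))^(k+1) := by ring_nf

noncomputable def Cq (q : ℕ) : ℝ :=
  ((q:ℝ) - 1) * Real.Gamma (((q:ℝ)-1)/2)^4 * ((3:ℝ)^(q-1))^2 * ((q:ℝ)+1)^q /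
    (2 * Real.pi^2 * Real.Gamma ((q:ℝ)-1))

lemma alg_id (Q x G p Γ' : ℝ) (m : ℕ) (hx : x ≠ 0) (hp : p ≠ 0) (hΓ : Γ' ≠ 0) :
    ((Q-1)/(2*x)) * (2 * (G^2*3^(m+2)/(2*p*x^(m+2))) * ((Q+1)*x))^2 * (((Q+1)*x)^(m+1)/Γ')
    = ((Q-1) * G^4 * ((3:ℝ)^(m+2))^2 * (Q+1)^(m+3) / (2*p^2*Γ')) / x^(m+2) := by
  simp only [mul_pow]
  field_simp
  ring

set_option maxHeartbeats 1000000 in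
lemma main_bound (q : ℕ) (hq : 3 ≤ q) (a : ℝ) (ha1 : -1 ≤ a) (ha2 : a ≤ 1)
    (n : ℕ) (hn : 2 ≤ n) :
    wPsi (q:ℝ) a n ^ 2 * dKQ (q:ℝ) n ≤ Cq q / (n:ℝ)^2 := by
  obtain ⟨mq, hq3⟩ : ∃ m, q = m + 3 := ⟨q - 3, by omega⟩
  have hπ := Real.pi_pos
  have hn1 : (1:ℝ) ≤ (n:ℝ) := by exact_mod_cast (by omega : 1 ≤ n)
  have hn0 : (0:ℝ) < (n:ℝ) := by linarith
  have hq1 : (2:ℝ) ≤ (q:ℝ) - 1 := by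
    have : (3:ℝ) ≤ (q:ℝ) := by exact_mod_cast hq
    linarith
  have hGq : (0:ℝ) < Real.Gamma (((q:ℝ)-1)/2) := Real.Gamma_pos_of_pos (by linarith)
  have hG2 : (0:ℝ) < Real.Gamma ((q:ℝ)-1) := Real.Gamma_pos_of_pos (by linarith)
  set k' : ℕ := n / 2 with hk'
  have hk1 : 1 ≤ k' := by omega
  have hk1' : (1:ℝ) ≤ (k':ℝ) := by exact_mod_cast hk1
  have hn3 : (n:ℝ) ≤ 3 * (k':ℝ) := by
    have : n ≤ 3 * k' := by omega
    exact_mod_cast this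
  set G : ℝ := Real.Gamma (((q:ℝ)-1)/2) with hG
  set α : ℝ := alphaKQ (q:ℝ) k' with hα'
  have hGh : (0:ℝ) < Real.Gamma ((k':ℝ) + 1/2) := Real.Gamma_pos_of_pos (by linarith)
  have hGk : (0:ℝ) < Real.Gamma ((k':ℝ) + (q:ℝ)/2) := Real.Gamma_pos_of_pos (by positivity)
  have hα0 : 0 < α := by
    rw [hα', alphaKQ, ← hG]
    positivity
  set A : ℝ := G^2 * 3^(q-1) / (2 * Real.pi * (n:ℝ)^(q-1)) with hA
  have hA0 : 0 < A := by rw [hA]; positivity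
  have hαA : α ≤ A := by
    rw [hα', alphaKQ, ← hG, hA]
    rw [div_le_div_iff₀ (by positivity) (by positivity)]
    have h1 := lemA q k' hq hk1
    have h2 : (n:ℝ)^(q-1) ≤ 3^(q-1) * (k':ℝ)^(q-1) := by
      calc (n:ℝ)^(q-1) ≤ (3*(k':ℝ))^(q-1) := by gcongr
        _ = 3^(q-1) * (k':ℝ)^(q-1) := by rw [mul_pow]
    calc Real.Gamma ((k':ℝ)+1/2)^2 * G^2 * (2*Real.pi*(n:ℝ)^(q-1))
        = (Real.Gamma ((k':ℝ)+1/2)^2 * (n:ℝ)^(q-1)) * (G^2 * (2*Real.pi)) := by ring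
      _ ≤ (Real.Gamma ((k':ℝ)+1/2)^2 * (3^(q-1) * (k':ℝ)^(q-1))) * (G^2 * (2*Real.pi)) := by
          gcongr
      _ = (Real.Gamma ((k':ℝ)+1/2)^2 * (k':ℝ)^(q-1)) * 3^(q-1) * (G^2 * (2*Real.pi)) := by ring
      _ ≤ Real.Gamma ((k':ℝ)+(q:ℝ)/2)^2 * 3^(q-1) * (G^2 * (2*Real.pi)) := by gcongr
      _ = G^2*3^(q-1) * (2*Real.pi*Real.Gamma ((k':ℝ)+(q:ℝ)/2)^2) := by ring
  set b : ℝ := bPsi (q:ℝ) a n with hb'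
  have h2nq : (0:ℝ) < 2*(n:ℝ) + (q:ℝ) - 1 := by linarith
  have ha1' : (0:ℝ) ≤ 1 + a := by linarith
  have ha2' : (0:ℝ) ≤ 1 - a := by linarith
  have ha1'' : (1:ℝ) + a ≤ 2 := by linarith
  have ha2'' : (1:ℝ) - a ≤ 2 := by linarith
  have hc : alphaKQ (q:ℝ) (n/2) = α := by rw [hα']
  have hb0 : 0 ≤ b := by
    rw [hb', bPsi]
    split
    · rw [hc]
      exact mul_nonneg (mul_nonneg hα0.le h2nq.le) ha1'
    · rw [hc]
      have hden : (0:ℝ) < (n:ℝ) - 1 + q := by linarith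
      exact div_nonneg (mul_nonneg (mul_nonneg (mul_nonneg hα0.le hn0.le) h2nq.le) ha2') hden.le
  have hb1 : b ≤ 2 * α * (2*(n:ℝ) + q - 1) := by
    rw [hb', bPsi]
    split
    · rw [hc]
      calc α * (2*(n:ℝ)+q-1) * (1+a) ≤ α * (2*(n:ℝ)+q-1) * 2 := by
            exact mul_le_mul_of_nonneg_left ha1'' (mul_nonneg hα0.le h2nq.le)
        _ = 2 * α * (2*(n:ℝ)+q-1) := by ring
    · rw [hc]
      have hden : (0:ℝ) < (n:ℝ) - 1 + q := by linarith
      rw [div_le_iff₀ hden]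
      have hnd : (n:ℝ) ≤ (n:ℝ) - 1 + q := by linarith
      calc α * (n:ℝ) * (2*(n:ℝ)+q-1) * (1-a)
          ≤ α * (n:ℝ) * (2*(n:ℝ)+q-1) * 2 := by
            exact mul_le_mul_of_nonneg_left ha2''
              (mul_nonneg (mul_nonneg hα0.le hn0.le) h2nq.le)
        _ = 2 * α * (2*(n:ℝ)+q-1) * (n:ℝ) := by ring
        _ ≤ 2 * α * (2*(n:ℝ)+q-1) * ((n:ℝ)-1+q) := by
            exact mul_le_mul_of_nonneg_left hnd
              (by nlinarith [mul_pos hα0 h2nq])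
  have hb2 : b ≤ 2 * A * (((q:ℝ)+1) * n) := by
    refine hb1.trans ?_
    have h3 : 2*(n:ℝ) + q - 1 ≤ ((q:ℝ)+1)*n := by nlinarith
    exact mul_le_mul (by linarith) h3 h2nq.le (by positivity)
  set F : ℝ := Real.Gamma ((n:ℝ) + q - 1) / (Real.Gamma ((q:ℝ)-1) * (Nat.factorial n : ℝ)) with hF'
  have hGamnat : Real.Gamma ((n:ℝ) + q - 1) = ((n + q - 2).factorial : ℝ) := by
    have hcast : (n:ℝ) + q - 1 = ((n + q - 2 : ℕ):ℝ) + 1 := by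
      have h2 : 2 ≤ n + q := by omega
      have : ((n + q - 2 : ℕ):ℝ) = (n:ℝ) + q - 2 := by
        push_cast [Nat.cast_sub h2]
        ring
      rw [this]; ring
    rw [hcast, Real.Gamma_nat_eq_factorial]
  have hfac0 : (0:ℝ) < (Nat.factorial n : ℝ) := by exact_mod_cast Nat.factorial_pos n
  have hfact : ((n + q - 2).factorial : ℝ) ≤ (Nat.factorial n : ℝ) * (((q:ℝ)+1)*n)^(q-2) := by
    have h1 : (n + q - 2).factorial ≤ n.factorial * (n + (q-2))^(q-2) := by
      have heq : n + q - 2 = n + (q - 2) := by omega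
      rw [heq]; exact fact_le_aux n (q-2)
    have h2 : ((n + (q-2):ℕ):ℝ) ≤ ((q:ℝ)+1)*n := by
      have h3 : ((q - 2 : ℕ):ℝ) = (q:ℝ) - 2 := by
        push_cast [Nat.cast_sub (by omega : 2 ≤ q)]; ring
      push_cast [h3]
      have hqn : (q:ℝ) ≤ (q:ℝ)*n := le_mul_of_one_le_right (by linarith) hn1
      linarith
    calc ((n + q - 2).factorial : ℝ) ≤ (n.factorial : ℝ) * ((n + (q-2):ℕ):ℝ)^(q-2) := by
          exact_mod_cast h1
      _ ≤ (n.factorial : ℝ) * (((q:ℝ)+1)*n)^(q-2) := by gcongr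
  have hF1 : F ≤ (((q:ℝ)+1)*n)^(q-2) / Real.Gamma ((q:ℝ)-1) := by
    rw [hF', hGamnat]
    calc ((n + q - 2).factorial : ℝ) / (Real.Gamma ((q:ℝ)-1) * (Nat.factorial n : ℝ))
        ≤ ((Nat.factorial n : ℝ) * (((q:ℝ)+1)*n)^(q-2)) / (Real.Gamma ((q:ℝ)-1) * (Nat.factorial n : ℝ)) := by
          gcongr
      _ = (((q:ℝ)+1)*n)^(q-2) / Real.Gamma ((q:ℝ)-1) := by
          field_simp
  have hF0 : 0 ≤ F := by
    rw [hF', hGamnat]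
    positivity
  set t : ℝ := 1 + 2*(n:ℝ)/((q:ℝ)-1) with ht'
  have ht0 : 0 < t := by rw [ht']; positivity
  have hterm : wPsi (q:ℝ) a n ^ 2 * dKQ (q:ℝ) n = t⁻¹ * b^2 * F := by
    rw [wPsi, dKQ, ← hb', ← hF', ← ht']
    field_simp
  have htinv : t⁻¹ ≤ ((q:ℝ)-1)/(2*(n:ℝ)) := by
    have hpos : (0:ℝ) < 2*(n:ℝ)/((q:ℝ)-1) := by positivity
    have h1 : 2*(n:ℝ)/((q:ℝ)-1) ≤ t := by rw [ht']; linarith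
    calc t⁻¹ ≤ (2*(n:ℝ)/((q:ℝ)-1))⁻¹ := by
          exact inv_anti₀ hpos h1
      _ = ((q:ℝ)-1)/(2*(n:ℝ)) := by rw [inv_div]
  rw [hterm]
  have step : t⁻¹ * b^2 * F ≤ (((q:ℝ)-1)/(2*(n:ℝ))) * (2 * A * (((q:ℝ)+1) * n))^2
      * ((((q:ℝ)+1)*n)^(q-2) / Real.Gamma ((q:ℝ)-1)) := by
    gcongr
  refine step.trans ?_
  have hexp1 : q - 1 = mq + 2 := by omega
  have hexp2 : q - 2 = mq + 1 := by omega
  have hCq : Cq q = ((q:ℝ)-1) * G^4 * ((3:ℝ)^(mq+2))^2 * ((q:ℝ)+1)^(mq+3) /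
      (2*Real.pi^2*Real.Gamma ((q:ℝ)-1)) := by
    rw [Cq, hexp1, ← hG]
    congr 2
    rw [hq3]
  rw [hA, hexp1, hexp2, hCq]
  rw [alg_id ((q:ℝ)) ((n:ℝ)) G Real.pi (Real.Gamma ((q:ℝ)-1)) mq hn0.ne' hπ.ne' hG2.ne']
  have hnum : (0:ℝ) ≤ ((q:ℝ)-1) * G^4 * ((3:ℝ)^(mq+2))^2 * ((q:ℝ)+1)^(mq+3) /
      (2*Real.pi^2*Real.Gamma ((q:ℝ)-1)) := by
    apply div_nonneg _ (by positivity)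
    have h9 : (0:ℝ) ≤ (q:ℝ) - 1 := by linarith
    have h10 : (0:ℝ) ≤ G^4 := by positivity
    have h11 : (0:ℝ) ≤ ((3:ℝ)^(mq+2))^2 := by positivity
    have h12 : (0:ℝ) ≤ ((q:ℝ)+1)^(mq+3) := by positivity
    exact mul_nonneg (mul_nonneg (mul_nonneg h9 h10) h11) h12
  exact div_le_div_of_nonneg_left hnum (by positivity) (pow_le_pow_right₀ hn1 (by omega))

lemma term_nonneg (q : ℕ) (hq : 3 ≤ q) (a : ℝ) (n : ℕ) :
    0 ≤ wPsi (q:ℝ) a n ^ 2 * dKQ (q:ℝ) n := by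
  apply mul_nonneg (sq_nonneg _)
  have hq1 : (2:ℝ) ≤ (q:ℝ) - 1 := by
    have : (3:ℝ) ≤ (q:ℝ) := by exact_mod_cast hq
    linarith
  have hn0 : (0:ℝ) ≤ (n:ℝ) := n.cast_nonneg
  rw [dKQ]
  have h1 : 0 < Real.Gamma ((n:ℝ) + q - 1) := Real.Gamma_pos_of_pos (by linarith)
  have h2 : 0 < Real.Gamma ((q:ℝ) - 1) := Real.Gamma_pos_of_pos (by linarith)
  have h3 : (0:ℝ) < (Nat.factorial n : ℝ) := by exact_mod_cast Nat.factorial_pos n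
  apply mul_nonneg
  · have : (0:ℝ) ≤ 2 * (n:ℝ) / ((q:ℝ) - 1) := by positivity
    linarith
  · exact div_nonneg h1.le (mul_nonneg h2.le h3.le)

/-- Summability of the Sobolev weights: for `q ≥ 3` and `a ∈ [−1,1]`,
`Σ_{k≥1} w_{k,q}² d_{k,q} < ∞`. -/
theorem summable_wPsi_sq_dKQ (q : ℕ) (hq : 3 ≤ q) (a : ℝ) (ha : a ∈ Set.Icc (-1 : ℝ) 1) :
    Summable (fun k : ℕ => wPsi (q : ℝ) a (k + 1) ^ 2 * dKQ (q : ℝ) (k + 1)) := by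
  obtain ⟨ha1, ha2⟩ := ha
  have hmaj : Summable (fun k : ℕ => Cq q / ((k:ℝ) + 2)^2) := by
    have h1 : Summable (fun k : ℕ => 1 / ((k:ℝ))^2) :=
      Real.summable_one_div_nat_pow.mpr (by norm_num)
    have h2 : Summable (fun k : ℕ => 1 / (((k + 2 : ℕ)):ℝ)^2) :=
      (summable_nat_add_iff (f := fun k : ℕ => 1 / ((k:ℝ))^2) 2).mpr h1
    have h3 : Summable (fun k : ℕ => 1 / ((k:ℝ) + 2)^2) := by
      convert h2 using 2 with k
      push_cast
      ring
    have := h3.mul_left (Cq q)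
    simpa [div_eq_mul_inv, mul_comm] using this
  have hshift : Summable (fun k : ℕ => wPsi (q:ℝ) a (k + 2) ^ 2 * dKQ (q:ℝ) (k + 2)) := by
    apply Summable.of_nonneg_of_le (fun k => term_nonneg q hq a (k+2))
      (fun k => ?_) hmaj
    have h := main_bound q hq a ha1 ha2 (k+2) (by omega)
    have hc : (((k + 2 : ℕ)):ℝ) = (k:ℝ) + 2 := by push_cast; ring
    rwa [hc] at h
  exact (summable_nat_add_iff (f := fun k : ℕ => wPsi (q:ℝ) a (k + 1) ^ 2 * dKQ (q:ℝ) (k + 1)) 1).mp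
    (by exact hshift)
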